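/- Fixing m − 1 entries of the Urysohn matrix, at most one per row, uniquely determines the matrix within its output-equivalence class: if U and U' are output-equivalent m × n Urysohn matrices, and there exist m − 1 positions (j_1, c_1),…,(j_{m−1}, c_{m−1}) with pairwise distinct row indices j_r such that U[j_r, c_r] = U'[j_r, c_r] for all r, then U = U'. -/
import Mathlib


/-- The output of the discrete Urysohn operator with matrix `U` on the input window
`k = (k_1, …, k_m)` (with `k_m` the most recent input): `y(k) = Σ_{j=1}^m U[j, k_{m-j+1}]`. -/
def uryOut {m n : ℕ} (U : Matrix (Fin m) (Fin n) ℝ) (k : Fin m → Fin n) : ℝ :=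
  ∑ j : Fin m, U j (k j.rev)

lemma ury_row_const {m n : ℕ} (hn : 0 < n)
    (U U' : Matrix (Fin m) (Fin n) ℝ)
    (hequiv : ∀ k : Fin m → Fin n, uryOut U k = uryOut U' k)
    (j : Fin m) (a b : Fin n) :
    U j a - U' j a = U j b - U' j b := by
  set a₀ : Fin n := ⟨0, hn⟩
  have key : ∀ x : Fin n,
      ∑ i : Fin m, (U i ((Function.update (fun _ => a₀) j.rev x) i.rev)
        - U' i ((Function.update (fun _ => a₀) j.rev x) i.rev)) = 0 := by
    intro x
    rw [Finset.sum_sub_distrib, sub_eq_zero]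
    exact hequiv _
  have hsingle : ∀ x : Fin n,
      ∑ i : Fin m, (U i ((Function.update (fun _ => a₀) j.rev x) i.rev)
        - U' i ((Function.update (fun _ => a₀) j.rev x) i.rev))
      = (U j x - U' j x) + ∑ i ∈ Finset.univ.erase j, (U i a₀ - U' i a₀) := by
    intro x
    rw [← Finset.add_sum_erase _ _ (Finset.mem_univ j)]
    congr 1
    · rw [Function.update_self]
    · apply Finset.sum_congr rfl
      intro i hi
      have hne : i.rev ≠ j.rev := by
        simp only [ne_eq, Fin.rev_inj]
        exact Finset.ne_of_mem_erase hi
      rw [Function.update_of_ne hne]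
  have ha := key a; rw [hsingle a] at ha
  have hb := key b; rw [hsingle b] at hb
  linarith

theorem urysohn_fixed_entries_unique (m n : ℕ) (hm : 0 < m) (hn : 0 < n)
    (U U' : Matrix (Fin m) (Fin n) ℝ)
    (hequiv : ∀ k : Fin m → Fin n, uryOut U k = uryOut U' k)
    (pos : Fin (m - 1) → Fin m × Fin n)
    (hinj : Function.Injective fun r => (pos r).1)
    (hagree : ∀ r : Fin (m - 1), U (pos r).1 (pos r).2 = U' (pos r).1 (pos r).2) :
    U = U' := by
  set a₀ : Fin n := ⟨0, hn⟩
  set d : Fin m → ℝ := fun j => U j a₀ - U' j a₀ with hd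
  have hconst : ∀ j a, U j a - U' j a = d j := fun j a =>
    ury_row_const hn U U' hequiv j a a₀
  have hsum : ∑ j : Fin m, d j = 0 := by
    have := hequiv (fun _ => a₀)
    unfold uryOut at this
    rw [show (∑ j : Fin m, d j) = ∑ j : Fin m, (U j a₀ - U' j a₀) from rfl,
      Finset.sum_sub_distrib, sub_eq_zero]
    exact this
  have hdzero : ∀ r, d (pos r).1 = 0 := by
    intro r
    rw [← hconst (pos r).1 (pos r).2, hagree r, sub_self]
  set S : Finset (Fin m) := Finset.image (fun r => (pos r).1) Finset.univ with hS
  have hcardS : S.card = m - 1 := by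
    rw [hS, Finset.card_image_of_injective _ hinj, Finset.card_univ, Fintype.card_fin]
  have hcardC : Sᶜ.card = 1 := by
    rw [Finset.card_compl, Fintype.card_fin, hcardS]
    omega
  obtain ⟨x, hx⟩ := Finset.card_eq_one.mp hcardC
  have hdS : ∀ j ∈ S, d j = 0 := by
    intro j hj
    obtain ⟨r, _, hr⟩ := Finset.mem_image.mp hj
    rw [← hr]; exact hdzero r
  have hdx : d x = 0 := by
    have : ∑ j : Fin m, d j = d x := by
      rw [← Finset.sum_add_sum_compl S, Finset.sum_eq_zero hdS, hx, Finset.sum_singleton,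
        zero_add]
    rw [← this, hsum]
  have hall : ∀ j, d j = 0 := by
    intro j
    by_cases hj : j ∈ S
    · exact hdS j hj
    · have : j ∈ Sᶜ := Finset.mem_compl.mpr hj
      rw [hx, Finset.mem_singleton] at this
      rw [this]; exact hdx
  ext j a
  have := hconst j a
  rw [hall j] at this
  linarith
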